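/- Suppose U = {u ∈ ℝᵐ : u̲ ≤ u ≤ ū} is a nondegenerate compact box (u̲(j) < ū(j) for every coordinate j), X ⊆ ℝⁿ and T ⊆ X are open and bounded, and f : ℝⁿ × ℝᵐ → ℝⁿ satisfies ‖f(x,u) − f(x',u)‖ ≤ L_x‖x − x'‖ and ‖f(x,u) − f(x,u')‖ ≤ L_u‖u − u'‖ for all x, x' ∈ ℝⁿ and u, u' ∈ U, with L_x, L_u > 0. Let P be a Borel probability measure on ℝᵐ with P(U) = 1 satisfying Assumption 1. Then for every initial state x₀ ∈ ℝⁿ the following are equivalent: (a) there exist a control policy π and k ∈ ℕ such that φ^π_{x₀}(k) ∈ T and φ^π_{x₀}(t) ∈ X for all 0 ≤ t ≤ k; (b) P^∞({π : ∃ k ∈ ℕ, φ^π_{x₀}(k) ∈ T and φ^π_{x₀}(l) ∈ X for all 0 ≤ l ≤ k}) > 0. In other words, a controlled reach-avoid set is exactly a 0-reach-avoid set. -/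

import Mathlib

open MeasureTheory Set

noncomputable section

/-- Trajectory of the discrete-time control system `x(t+1) = f(x(t), u(t))`. -/
def traj {n m : ℕ} (f : (Fin n → ℝ) → (Fin m → ℝ) → (Fin n → ℝ))
    (x0 : Fin n → ℝ) (π : ℕ → (Fin m → ℝ)) : ℕ → (Fin n → ℝ)
  | 0 => x0
  | t + 1 => f (traj f x0 π t) (π t)

/-- Error propagation constant: `errC 0 = 0`, `errC (t+1) = Lx * errC t + Lu`. -/
def errC (Lx Lu : ℝ) : ℕ → ℝ
  | 0 => 0
  | t + 1 => Lx * errC Lx Lu t + Lu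

lemma errC_nonneg {Lx Lu : ℝ} (hLx : 0 < Lx) (hLu : 0 < Lu) : ∀ t, 0 ≤ errC Lx Lu t := by
  intro t
  induction t with
  | zero => simp [errC]
  | succ t ih => simp only [errC]; positivity

lemma errC_mono {Lx Lu : ℝ} (hLx : 0 < Lx) (hLu : 0 < Lu) : Monotone (errC Lx Lu) := by
  apply monotone_nat_of_le_succ
  intro t
  induction t with
  | zero => simp [errC, le_of_lt hLu]
  | succ t ih =>
      show errC Lx Lu (t+1) ≤ Lx * errC Lx Lu (t+1) + Lu
      simp only [errC] at ih ⊢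
      have := mul_le_mul_of_nonneg_left ih (le_of_lt hLx)
      linarith

/-- Theorem 1: under Assumption 1, a controlled reach-avoid set is exactly a
`0`-reach-avoid set, i.e. for every initial state, reach-avoidance by some
control policy is equivalent to positive probability of reach-avoidance
under i.i.d. random inputs. -/
theorem stmt_2 {n m : ℕ} (lo hi : Fin m → ℝ) (hbox : ∀ j, lo j < hi j)
    (f : (Fin n → ℝ) → (Fin m → ℝ) → (Fin n → ℝ))
    (Lx Lu : ℝ) (hLx0 : 0 < Lx) (hLu0 : 0 < Lu)
    (hLx : ∀ x x' : Fin n → ℝ, ∀ u ∈ Set.Icc lo hi,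
      ‖f x u - f x' u‖ ≤ Lx * ‖x - x'‖)
    (hLu : ∀ x : Fin n → ℝ, ∀ u ∈ Set.Icc lo hi, ∀ u' ∈ Set.Icc lo hi,
      ‖f x u - f x u'‖ ≤ Lu * ‖u - u'‖)
    (X T : Set (Fin n → ℝ))
    (hXo : IsOpen X) (hXb : Bornology.IsBounded X)
    (hTo : IsOpen T) (hTb : Bornology.IsBounded T) (hTX : T ⊆ X)
    (P : Measure (Fin m → ℝ)) [IsProbabilityMeasure P]
    (hPU : P (Set.Icc lo hi) = 1)
    -- Assumption 1: every Borel subset of `U` with nonempty interior has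
    -- positive probability.
    (hP1 : ∀ B ⊆ Set.Icc lo hi, MeasurableSet B → (interior B).Nonempty → 0 < P B)
    -- `Pinf` is the i.i.d. product measure `P^∞` on the sequence space,
    -- characterized on cylinder sets.
    (Pinf : Measure (ℕ → (Fin m → ℝ))) [IsProbabilityMeasure Pinf]
    (hPinf : ∀ (k : ℕ) (s : ℕ → Set (Fin m → ℝ)), (∀ i, MeasurableSet (s i)) →
      Pinf {ω | ∀ i < k, ω i ∈ s i} = ∏ i ∈ Finset.range k, P (s i)) :
    ∀ x0 : Fin n → ℝ,
      (∃ π : ℕ → (Fin m → ℝ), (∀ t, π t ∈ Set.Icc lo hi) ∧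
          ∃ k : ℕ, traj f x0 π k ∈ T ∧ ∀ t ≤ k, traj f x0 π t ∈ X) ↔
        0 < Pinf {π : ℕ → (Fin m → ℝ) |
          ∃ k : ℕ, traj f x0 π k ∈ T ∧ ∀ l ≤ k, traj f x0 π l ∈ X} := by
  intro x0
  constructor
  · -- (a) → (b)
    rintro ⟨π, hπU, k, hTk, hXk⟩
    -- radius around trajectory staying in X
    have hXe : ∀ t, ∃ ε > 0, t ≤ k → Metric.ball (traj f x0 π t) ε ⊆ X := by
      intro t
      by_cases ht : t ≤ k
      · obtain ⟨ε, hε, hb⟩ := Metric.isOpen_iff.mp hXo _ (hXk t ht)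
        exact ⟨ε, hε, fun _ => hb⟩
      · exact ⟨1, one_pos, fun h => absurd h ht⟩
    choose εX hεXpos hεXball using hXe
    obtain ⟨εT, hεTpos, hεTball⟩ := Metric.isOpen_iff.mp hTo _ hTk
    have hne : (Finset.range (k+1)).Nonempty := ⟨0, by simp⟩
    set εmin : ℝ := min εT ((Finset.range (k+1)).inf' hne εX) with hεmin_def
    have hεmin : 0 < εmin := by
      apply lt_min hεTpos
      rw [Finset.lt_inf'_iff]
      intro i _
      exact hεXpos i
    set C : ℝ := errC Lx Lu k with hC_def
    have hC0 : 0 ≤ C := errC_nonneg hLx0 hLu0 k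
    set δ : ℝ := εmin / (C + 1) with hδ_def
    have hδpos : 0 < δ := by positivity
    have hCδ : C * δ < εmin := by
      rw [hδ_def, mul_div_assoc']
      rw [div_lt_iff₀ (by linarith)]
      nlinarith
    -- the boxes
    set B : ℕ → Set (Fin m → ℝ) := fun i =>
      Set.Icc (fun j => max (lo j) (π i j - δ)) (fun j => min (hi j) (π i j + δ)) with hB_def
    have hBsub : ∀ i, B i ⊆ Set.Icc lo hi := by
      intro i u hu
      rw [Set.mem_Icc] at hu ⊢
      constructor <;> intro j
      · exact le_trans (le_max_left _ _) (hu.1 j)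
      · exact le_trans (hu.2 j) (min_le_left _ _)
    have hBmeas : ∀ i, MeasurableSet (B i) := fun i => measurableSet_Icc
    have hBlt : ∀ i j, max (lo j) (π i j - δ) < min (hi j) (π i j + δ) := by
      intro i j
      have h1 := (hπU i).1 j
      have h2 := (hπU i).2 j
      have := hbox j
      apply max_lt <;> apply lt_min <;> linarith
    have hBint : ∀ i, (interior (B i)).Nonempty := by
      intro i
      show (interior (Set.Icc (fun j => max (lo j) (π i j - δ))
        (fun j => min (hi j) (π i j + δ)))).Nonempty
      rw [← Set.pi_univ_Icc, interior_pi_set Set.finite_univ]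
      refine ⟨fun j => (max (lo j) (π i j - δ) + min (hi j) (π i j + δ)) / 2, ?_⟩
      rw [Set.mem_univ_pi]
      intro j
      rw [interior_Icc, Set.mem_Ioo]
      have := hBlt i j
      constructor <;> linarith
    have hBclose : ∀ i u, u ∈ B i → ‖u - π i‖ ≤ δ := by
      intro i u hu
      rw [pi_norm_le_iff_of_nonneg (le_of_lt hδpos)]
      intro j
      rw [Set.mem_Icc] at hu
      have h1 := hu.1 j
      have h2 := hu.2 j
      have h3 : π i j - δ ≤ max (lo j) (π i j - δ) := le_max_right _ _
      have h4 : min (hi j) (π i j + δ) ≤ π i j + δ := min_le_right _ _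
      simp only [Pi.sub_apply, Real.norm_eq_abs]
      rw [abs_le]
      constructor <;> linarith
    -- the cylinder event is contained in the reach-avoid event
    have hsub : {ω : ℕ → (Fin m → ℝ) | ∀ i < k, ω i ∈ B i} ⊆
        {π : ℕ → (Fin m → ℝ) |
          ∃ k : ℕ, traj f x0 π k ∈ T ∧ ∀ l ≤ k, traj f x0 π l ∈ X} := by
      intro ω hω
      have key : ∀ t, t ≤ k → ‖traj f x0 ω t - traj f x0 π t‖ ≤ errC Lx Lu t * δ := by
        intro t
        induction t with
        | zero => intro _; simp [traj, errC]
        | succ t ih =>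
            intro hle
            have htk : t < k := Nat.lt_of_succ_le hle
            have iht := ih (le_of_lt htk)
            have hωU : ω t ∈ Set.Icc lo hi := hBsub t (hω t htk)
            have hd : ‖ω t - π t‖ ≤ δ := hBclose t _ (hω t htk)
            calc ‖traj f x0 ω (t+1) - traj f x0 π (t+1)‖
              = ‖f (traj f x0 ω t) (ω t) - f (traj f x0 π t) (π t)‖ := by rfl
            _ ≤ ‖f (traj f x0 ω t) (ω t) - f (traj f x0 π t) (ω t)‖ +
                ‖f (traj f x0 π t) (ω t) - f (traj f x0 π t) (π t)‖ :=
                norm_sub_le_norm_sub_add_norm_sub _ _ _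
            _ ≤ Lx * ‖traj f x0 ω t - traj f x0 π t‖ + Lu * ‖ω t - π t‖ :=
                add_le_add (hLx _ _ _ hωU) (hLu _ _ hωU _ (hπU t))
            _ ≤ Lx * (errC Lx Lu t * δ) + Lu * δ := by
                apply add_le_add
                · exact mul_le_mul_of_nonneg_left iht (le_of_lt hLx0)
                · exact mul_le_mul_of_nonneg_left hd (le_of_lt hLu0)
            _ = errC Lx Lu (t+1) * δ := by simp only [errC]; ring
      have hclose : ∀ t, t ≤ k → dist (traj f x0 ω t) (traj f x0 π t) < εmin := by
        intro t ht
        rw [dist_eq_norm]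
        calc ‖traj f x0 ω t - traj f x0 π t‖ ≤ errC Lx Lu t * δ := key t ht
          _ ≤ C * δ := by
              apply mul_le_mul_of_nonneg_right (errC_mono hLx0 hLu0 ht) (le_of_lt hδpos)
          _ < εmin := hCδ
      refine ⟨k, ?_, ?_⟩
      · apply hεTball
        rw [Metric.mem_ball]
        exact lt_of_lt_of_le (hclose k le_rfl) (min_le_left _ _)
      · intro t ht
        apply hεXball t ht
        rw [Metric.mem_ball]
        refine lt_of_lt_of_le (hclose t ht) ?_
        exact le_trans (min_le_right _ _) (Finset.inf'_le εX (by simp [Nat.lt_succ_iff, ht]))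
    have hprodpos : 0 < ∏ i ∈ Finset.range k, P (B i) := by
      rw [CanonicallyOrderedAdd.prod_pos]
      intro i _
      exact hP1 (B i) (hBsub i) (hBmeas i) (hBint i)
    refine lt_of_lt_of_le ?_ (measure_mono hsub)
    rw [hPinf k B hBmeas]
    exact hprodpos
  · -- (b) → (a)
    intro hpos
    set S := {π : ℕ → (Fin m → ℝ) |
      ∃ k : ℕ, traj f x0 π k ∈ T ∧ ∀ l ≤ k, traj f x0 π l ∈ X} with hS_def
    set A : ℕ → Set (ℕ → (Fin m → ℝ)) := fun k => {ω | ∀ i < k, ω i ∈ Set.Icc lo hi}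
      with hA_def
    have hAmeas : ∀ k, MeasurableSet (A k) := by
      intro k
      have : A k = ⋂ i, ⋂ (_ : i < k), (fun ω : ℕ → (Fin m → ℝ) => ω i) ⁻¹' Set.Icc lo hi := by
        ext ω; simp [hA_def]
      rw [this]
      exact MeasurableSet.iInter fun i => MeasurableSet.iInter fun _ =>
        (measurable_pi_apply i) measurableSet_Icc
    have hA1 : ∀ k, Pinf (A k) = 1 := by
      intro k
      rw [hA_def]
      rw [hPinf k (fun _ => Set.Icc lo hi) (fun _ => measurableSet_Icc)]
      simp [hPU]
    have hAc0 : ∀ k, Pinf (A k)ᶜ = 0 := by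
      intro k
      rw [measure_compl (hAmeas k) (measure_ne_top _ _), hA1 k, measure_univ, tsub_self]
    have hU0 : Pinf (⋃ k, (A k)ᶜ) = 0 := measure_iUnion_null hAc0
    have hSA : (S ∩ ⋂ k, A k).Nonempty := by
      by_contra h
      rw [Set.not_nonempty_iff_eq_empty] at h
      have hsub : S ⊆ ⋃ k, (A k)ᶜ := by
        intro ω hω
        rw [Set.iUnion_eq_compl_iInter_compl]
        simp only [Set.mem_compl_iff, Set.mem_iInter, compl_compl]
        intro hall
        exact Set.eq_empty_iff_forall_notMem.mp h ω ⟨hω, Set.mem_iInter.mpr hall⟩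
      have := le_trans (measure_mono hsub) (le_of_eq hU0)
      exact absurd (le_antisymm this zero_le) (ne_of_gt hpos)
    obtain ⟨π, hπS, hπA⟩ := hSA
    refine ⟨π, ?_, hπS⟩
    intro t
    have := Set.mem_iInter.mp hπA (t+1)
    exact this t (Nat.lt_succ_self t)
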